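/- (Theorem 5.1, converse direction.) Let V ⊂ Z and W ⊂ Z' be closed subspaces and let T : D(T) ⊂ V → W be a closed linear operator with D(T) dense in V. Define Ã as the restriction of A_max to the domain D(Ã) := {u ∈ D(A_max) : u_ζ ∈ D(T) and pr_W(A_max u) = T u_ζ}. Then Ã is a closed operator with A_min ⊂ Ã ⊂ A_max, the closure of {u_ζ : u ∈ D(Ã)} equals V, and the closure of {v_{ζ'} : v ∈ D(Ã*)} equals W; thus Ã corresponds to T : V → W. -/

import Mathlib

noncomputable section

open Filter Topology

namespace GrubbExt

variable {H : Type*} [NormedAddCommGroup H] [InnerProductSpace ℂ H] [CompleteSpace H]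

/-- The inclusion of a closed subspace composed with the orthogonal projection onto it,
as a continuous linear map `H →L[ℂ] H`.  This is `i_K ∘ pr_K` in the notation of the paper. -/
def projCl (K : Submodule ℂ H) (hK : IsClosed (K : Set H)) : H →L[ℂ] H :=
  haveI : CompleteSpace K := hK.completeSpace_coe
  K.subtypeL.comp (K.orthogonalProjectionOnto)

/-- `R` is the (everywhere defined, bounded) inverse of `P - lam`. -/
structure IsResolvent (P : H →ₗ.[ℂ] H) (lam : ℂ) (R : H →L[ℂ] H) : Prop where
  mem : ∀ f : H, R f ∈ P.domain
  left : ∀ u : P.domain, R (P u - lam • (u : H)) = u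
  right : ∀ f : H, P ⟨R f, mem f⟩ - lam • R f = f

/-- `E^λ := I + λ(A_γ - λ)^{-1}`, given the resolvent `R = (A_γ - λ)^{-1}`. -/
def Eop (lam : ℂ) (R : H →L[ℂ] H) : H →L[ℂ] H := ContinuousLinearMap.id ℂ H + lam • R

/-- `E'^{λ̄} := I + λ̄(A_γ^* - λ̄)^{-1}`, given the resolvent `R' = (A_γ^* - λ̄)^{-1}`. -/
def Eop' (lam : ℂ) (R' : H →L[ℂ] H) : H →L[ℂ] H :=
  ContinuousLinearMap.id ℂ H + (starRingEnd ℂ lam) • R'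

/-- The resolvent set of a partially defined operator. -/
def resSet (P : H →ₗ.[ℂ] H) : Set ℂ := {lam | ∃ R : H →L[ℂ] H, IsResolvent P lam R}

/-- The set of "Rayleigh quotients" `Re⟨Pu,u⟩` over unit vectors `u` in the domain of `P`;
the lower bound `m(P)` is the infimum of this set. -/
def raySet (P : H →ₗ.[ℂ] H) : Set ℝ :=
  {r | ∃ u : P.domain, ‖(u : H)‖ = 1 ∧ r = (inner ℂ (P u) (u : H) : ℂ).re}

/-- The abstract set-up of Grubb's extension theory: a dual pair `A_min, A'_min` of closed
densely defined operators in a Hilbert space `H`, together with a reference operator `A_γ`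
lying between `A_min` and `A_max := (A'_min)*`, which is bijective with bounded inverse
(and whose adjoint is likewise bijective with bounded inverse). -/
structure Setup (H : Type*) [NormedAddCommGroup H] [InnerProductSpace ℂ H]
    [CompleteSpace H] where
  Amin : H →ₗ.[ℂ] H
  Amin' : H →ₗ.[ℂ] H
  closed_Amin : IsClosed (Amin.graph : Set (H × H))
  closed_Amin' : IsClosed (Amin'.graph : Set (H × H))
  dense_Amin : Dense (Amin.domain : Set H)
  dense_Amin' : Dense (Amin'.domain : Set H)
  Amin_le_max : Amin ≤ Amin'.adjoint
  Amin'_le_max' : Amin' ≤ Amin.adjoint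
  Agam : H →ₗ.[ℂ] H
  Amin_le_Agam : Amin ≤ Agam
  Agam_le_max : Agam ≤ Amin'.adjoint
  Agaminv : H →L[ℂ] H
  Agaminv_mem : ∀ f : H, Agaminv f ∈ Agam.domain
  Agaminv_left : ∀ u : Agam.domain, Agaminv (Agam u) = u
  Agaminv_right : ∀ f : H, Agam ⟨Agaminv f, Agaminv_mem f⟩ = f
  Agamstarinv : H →L[ℂ] H
  Agamstarinv_mem : ∀ f : H, Agamstarinv f ∈ Agam.adjoint.domain
  Agamstarinv_left : ∀ v : Agam.adjoint.domain, Agamstarinv (Agam.adjoint v) = v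
  Agamstarinv_right : ∀ f : H, Agam.adjoint ⟨Agamstarinv f, Agamstarinv_mem f⟩ = f

namespace Setup

variable (S : Setup H)

/-- `A_max := (A'_min)*`. -/
def Amax : H →ₗ.[ℂ] H := S.Amin'.adjoint

/-- `A'_max := (A_min)*`. -/
def Amax' : H →ₗ.[ℂ] H := S.Amin.adjoint

/-- `u_ζ := u - A_γ^{-1} A_max u`, the nullspace component of `u ∈ D(A_max)`. -/
def uzeta (u : S.Amax.domain) : H := (u : H) - S.Agaminv (S.Amax u)

/-- `v_{ζ'} := v - (A_γ^*)^{-1} A'_max v`, the nullspace component of `v ∈ D(A'_max)`. -/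
def vzeta (v : S.Amax'.domain) : H := (v : H) - S.Agamstarinv (S.Amax' v)

/-- `Z := ker A_max`, as a submodule of `H`. -/
def Zker : Submodule ℂ H := (LinearMap.ker S.Amax.toFun).map S.Amax.domain.subtype

/-- `Z' := ker A'_max`, as a submodule of `H`. -/
def Zker' : Submodule ℂ H := (LinearMap.ker S.Amax'.toFun).map S.Amax'.domain.subtype

lemma coe_Zker :
    (S.Zker : Set H) = ⋂ v : S.Amin'.domain, {y : H | (inner ℂ y (S.Amin' v) : ℂ) = 0} := by
  ext y
  simp only [Set.mem_iInter, Set.mem_setOf_eq, SetLike.mem_coe, Zker, Submodule.mem_map,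
    LinearMap.mem_ker]
  constructor
  · rintro ⟨u, hu, rfl⟩ v
    have h := (LinearPMap.adjoint_isFormalAdjoint S.dense_Amin') u v
    have hu' : S.Amin'.adjoint u = 0 := hu
    rw [hu'] at h
    simpa using h.symm
  · intro h
    have hmem : y ∈ S.Amax.domain := by
      refine LinearPMap.mem_adjoint_domain_of_exists _ ⟨0, fun x => ?_⟩
      simp [h x]
    refine ⟨⟨y, hmem⟩, ?_, rfl⟩
    exact LinearPMap.adjoint_apply_eq S.dense_Amin' ⟨y, hmem⟩ fun x => by simp [h x]

lemma isClosed_Zker : IsClosed (S.Zker : Set H) := by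
  rw [S.coe_Zker]
  exact isClosed_iInter fun v =>
    isClosed_eq (Continuous.inner continuous_id continuous_const) continuous_const

lemma coe_Zker' :
    (S.Zker' : Set H) = ⋂ v : S.Amin.domain, {y : H | (inner ℂ y (S.Amin v) : ℂ) = 0} := by
  ext y
  simp only [Set.mem_iInter, Set.mem_setOf_eq, SetLike.mem_coe, Zker', Submodule.mem_map,
    LinearMap.mem_ker]
  constructor
  · rintro ⟨u, hu, rfl⟩ v
    have h := (LinearPMap.adjoint_isFormalAdjoint S.dense_Amin) u v
    have hu' : S.Amin.adjoint u = 0 := hu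
    rw [hu'] at h
    simpa using h.symm
  · intro h
    have hmem : y ∈ S.Amax'.domain := by
      refine LinearPMap.mem_adjoint_domain_of_exists _ ⟨0, fun x => ?_⟩
      simp [h x]
    refine ⟨⟨y, hmem⟩, ?_, rfl⟩
    exact LinearPMap.adjoint_apply_eq S.dense_Amin ⟨y, hmem⟩ fun x => by simp [h x]

lemma isClosed_Zker' : IsClosed (S.Zker' : Set H) := by
  rw [S.coe_Zker']
  exact isClosed_iInter fun v =>
    isClosed_eq (Continuous.inner continuous_id continuous_const) continuous_const

/-- The orthogonal projection onto `Z = ker A_max`. -/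
def projZ : H →L[ℂ] H := projCl S.Zker S.isClosed_Zker

/-- The orthogonal projection onto `Z' = ker A'_max`. -/
def projZ' : H →L[ℂ] H := projCl S.Zker' S.isClosed_Zker'

variable (At : H →ₗ.[ℂ] H)

/-- `D(T) = {u_ζ : u ∈ D(Ã)}`, the set of nullspace components of elements of `D(Ã)`. -/
def dzeta : Set H := {x | ∃ u : S.Amax.domain, (u : H) ∈ At.domain ∧ x = S.uzeta u}

/-- `{v_{ζ'} : v ∈ D(Ã*)}`. -/
def dzeta' : Set H := {x | ∃ v : S.Amax'.domain, (v : H) ∈ At.adjoint.domain ∧ x = S.vzeta v}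

/-- `V := closure {u_ζ : u ∈ D(Ã)}`. -/
def Vsub : Submodule ℂ H := (Submodule.span ℂ (S.dzeta At)).topologicalClosure

/-- `W := closure {v_{ζ'} : v ∈ D(Ã*)}`. -/
def Wsub : Submodule ℂ H := (Submodule.span ℂ (S.dzeta' At)).topologicalClosure

lemma isClosed_Vsub : IsClosed ((S.Vsub At : Set H)) :=
  Submodule.isClosed_topologicalClosure _

lemma isClosed_Wsub : IsClosed ((S.Wsub At : Set H)) :=
  Submodule.isClosed_topologicalClosure _

/-- The orthogonal projection onto `V`. -/
def projV : H →L[ℂ] H := projCl (S.Vsub At) (S.isClosed_Vsub At)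

/-- The orthogonal projection onto `W`. -/
def projW : H →L[ℂ] H := projCl (S.Wsub At) (S.isClosed_Wsub At)

/-- The set `{(u_ζ, pr_W (A_max u)) : u ∈ D(Ã)}`, for a general closed subspace `W`. -/
def TgraphOn (W : Submodule ℂ H) (hW : IsClosed (W : Set H)) : Set (H × H) :=
  {p | ∃ u : S.Amax.domain, (u : H) ∈ At.domain ∧ p.1 = S.uzeta u ∧
    p.2 = projCl W hW (S.Amax u)}

/-- The graph of the operator `T : V → W` corresponding to `Ã`. -/
def Tgraph : Set (H × H) := S.TgraphOn At (S.Wsub At) (S.isClosed_Wsub At)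


/-- `F^λ := I - λ A_γ^{-1}`. -/
def Fop (lam : ℂ) : H →L[ℂ] H := ContinuousLinearMap.id ℂ H - lam • S.Agaminv

/-- `F'^{λ̄} := I - λ̄ (A_γ^*)^{-1}`. -/
def Fop' (lam : ℂ) : H →L[ℂ] H := ContinuousLinearMap.id ℂ H - (starRingEnd ℂ lam) • S.Agamstarinv

/-- `Z_λ := ker(A_max - λ)`, as a subset of `H`. -/
def ZkerL (lam : ℂ) : Set H :=
  {x | ∃ hx : x ∈ S.Amax.domain, S.Amax ⟨x, hx⟩ = lam • x}

/-- `Z'_{λ̄} := ker(A'_max - λ̄)`, as a subset of `H`. -/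
def ZkerL' (lam : ℂ) : Set H :=
  {x | ∃ hx : x ∈ S.Amax'.domain, S.Amax' ⟨x, hx⟩ = (starRingEnd ℂ lam) • x}

/-- `pr^λ_ζ u := u - (A_γ - λ)^{-1}(A_max - λ)u`, given the resolvent `R = (A_γ - λ)^{-1}`. -/
def uzetaL (lam : ℂ) (R : H →L[ℂ] H) (u : S.Amax.domain) : H :=
  (u : H) - R (S.Amax u - lam • (u : H))

/-- `pr^{λ̄}_{ζ'} v := v - (A_γ^* - λ̄)^{-1}(A'_max - λ̄)v`,
given the resolvent `R' = (A_γ^* - λ̄)^{-1}`. -/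
def vzetaL (lam : ℂ) (R' : H →L[ℂ] H) (v : S.Amax'.domain) : H :=
  (v : H) - R' (S.Amax' v - (starRingEnd ℂ lam) • (v : H))

/-- `D(T^λ) = {pr^λ_ζ u : u ∈ D(Ã)}`. -/
def dzetaL (lam : ℂ) (R : H →L[ℂ] H) : Set H :=
  {x | ∃ u : S.Amax.domain, (u : H) ∈ At.domain ∧ x = S.uzetaL lam R u}

/-- `{pr^{λ̄}_{ζ'} v : v ∈ D(Ã*)}`. -/
def dzetaL' (lam : ℂ) (R' : H →L[ℂ] H) : Set H :=
  {x | ∃ v : S.Amax'.domain, (v : H) ∈ At.adjoint.domain ∧ x = S.vzetaL lam R' v}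

/-- `V_λ := closure {pr^λ_ζ u : u ∈ D(Ã)}`. -/
def VLsub (lam : ℂ) (R : H →L[ℂ] H) : Submodule ℂ H :=
  (Submodule.span ℂ (S.dzetaL At lam R)).topologicalClosure

/-- `W_{λ̄} := closure {pr^{λ̄}_{ζ'} v : v ∈ D(Ã*)}`. -/
def WLsub (lam : ℂ) (R' : H →L[ℂ] H) : Submodule ℂ H :=
  (Submodule.span ℂ (S.dzetaL' At lam R')).topologicalClosure

lemma isClosed_WLsub (lam : ℂ) (R' : H →L[ℂ] H) : IsClosed ((S.WLsub At lam R' : Set H)) :=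
  Submodule.isClosed_topologicalClosure _

/-- The orthogonal projection onto `W_{λ̄}`. -/
def projWL (lam : ℂ) (R' : H →L[ℂ] H) : H →L[ℂ] H :=
  projCl (S.WLsub At lam R') (S.isClosed_WLsub At lam R')

/-- The graph of the operator `T^λ : V_λ → W_{λ̄}` corresponding to `Ã - λ`:
`{(pr^λ_ζ u, pr_{W_{λ̄}}((A_max - λ)u)) : u ∈ D(Ã)}`. -/
def TgraphL (lam : ℂ) (R R' : H →L[ℂ] H) : Set (H × H) :=
  {p | ∃ u : S.Amax.domain, (u : H) ∈ At.domain ∧ p.1 = S.uzetaL lam R u ∧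
    p.2 = S.projWL At lam R' (S.Amax u - lam • (u : H))}

/-- `G^λ_{V,W} x := -pr_W (λ E^λ x)`, where `W = W(Ã)`. -/
def Gval (lam : ℂ) (R : H →L[ℂ] H) (x : H) : H :=
  -(S.projW At (lam • Eop lam R x))

/-- `G^μ_{Z,Z} z := -pr_Z (μ E^μ z)`. -/
def GZval (lam : ℂ) (R : H →L[ℂ] H) (x : H) : H :=
  -(S.projZ (lam • Eop lam R x))

lemma mem_Amax_res {lam : ℂ} {Rt : H →L[ℂ] H} (h2 : At ≤ S.Amax)
    (hRt : IsResolvent At lam Rt) (w : H) :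
    S.Agaminv w - Rt (w - lam • S.Agaminv w) ∈ S.Amax.domain :=
  Submodule.sub_mem _ (S.Agam_le_max.1 (S.Agaminv_mem w)) (h2.1 (hRt.mem _))

/-- `M(λ) w := pr_ζ ((I - (Ã - λ)^{-1}(A_max - λ)) A_γ^{-1} w)`, the value of the abstract
`M`-function on `w`. -/
def Mval {lam : ℂ} {Rt : H →L[ℂ] H} (h2 : At ≤ S.Amax) (hRt : IsResolvent At lam Rt)
    (w : H) : H :=
  S.uzeta ⟨S.Agaminv w - Rt (w - lam • S.Agaminv w), S.mem_Amax_res At h2 hRt w⟩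

end Setup

section AuxGrubb

local notation "⟪" x ", " y "⟫" => @inner ℂ _ _ x y

lemma adjoint_anti {A B : H →ₗ.[ℂ] H} (hA : Dense (A.domain : Set H))
    (hB : Dense (B.domain : Set H)) (h : A ≤ B) : B.adjoint ≤ A.adjoint := by
  have hf : A.IsFormalAdjoint B.adjoint := by
    intro x y
    obtain ⟨x', hx', hAx⟩ := LinearPMap.exists_of_le h x
    rw [hAx, (LinearPMap.adjoint_isFormalAdjoint hB).symm x' y, hx']
  exact LinearPMap.IsFormalAdjoint.le_adjoint hA hf

lemma adjoint_graph_closed {B : H →ₗ.[ℂ] H} (hB : Dense (B.domain : Set H)) :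
    IsClosed (B.adjoint.graph : Set (H × H)) := by
  have hset : (B.adjoint.graph : Set (H × H)) =
      ⋂ u : B.domain, {p : H × H | ⟪p.2, (u : H)⟫ = ⟪p.1, B u⟫} := by
    ext p
    simp only [Set.mem_iInter, Set.mem_setOf_eq, SetLike.mem_coe]
    constructor
    · intro hp u
      obtain ⟨y, hy1, hy2⟩ := B.adjoint.mem_graph_iff.mp hp
      rw [← hy1, ← hy2]
      exact LinearPMap.adjoint_isFormalAdjoint hB y u
    · intro hp
      have hm : p.1 ∈ B.adjoint.domain :=
        LinearPMap.mem_adjoint_domain_of_exists _ ⟨p.2, fun u => hp u⟩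
      exact B.adjoint.mem_graph_iff.mpr ⟨⟨p.1, hm⟩, rfl,
        LinearPMap.adjoint_apply_eq hB _ (fun x => hp x)⟩
  rw [hset]
  exact isClosed_iInter fun u => isClosed_eq
    (Continuous.inner continuous_snd continuous_const)
    (Continuous.inner continuous_fst continuous_const)

lemma projCl_mem (K : Submodule ℂ H) (hK : IsClosed (K : Set H)) (x : H) :
    projCl K hK x ∈ K := by
  haveI := hK.completeSpace_coe
  exact (K.orthogonalProjectionOnto x).2

lemma projCl_eq_self (K : Submodule ℂ H) (hK : IsClosed (K : Set H)) {x : H} (hx : x ∈ K) :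
    projCl K hK x = x := by
  haveI := hK.completeSpace_coe
  exact Submodule.starProjection_eq_self_iff.mpr hx

lemma projCl_eq_zero (K : Submodule ℂ H) (hK : IsClosed (K : Set H)) {x : H} (hx : x ∈ Kᗮ) :
    projCl K hK x = 0 := by
  haveI := hK.completeSpace_coe
  have : K.orthogonalProjectionOnto x = 0 := Submodule.orthogonalProjectionOnto_eq_zero_iff.mpr hx
  simp only [projCl, ContinuousLinearMap.comp_apply, this]
  simp

lemma inner_projCl (K : Submodule ℂ H) (hK : IsClosed (K : Set H)) (x : H) {w : H}
    (hw : w ∈ K) : ⟪projCl K hK x, w⟫ = ⟪x, w⟫ := by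
  haveI := hK.completeSpace_coe
  have hperp := Submodule.sub_starProjection_mem_orthogonal (K := K) x
  have h0 : ⟪x - (K.orthogonalProjectionOnto x : H), w⟫ = 0 :=
    (Submodule.mem_orthogonal' _ _).mp hperp w hw
  rw [inner_sub_left, sub_eq_zero] at h0
  exact h0.symm

namespace Setup

variable (S : Setup H)

lemma mem_Zker_iff {x : H} :
    x ∈ S.Zker ↔ ∃ hx : x ∈ S.Amax.domain, S.Amax ⟨x, hx⟩ = 0 := by
  constructor
  · rintro ⟨u, hu, rfl⟩
    exact ⟨u.2, by simpa using hu⟩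
  · rintro ⟨hx, h⟩
    exact Submodule.mem_map.mpr ⟨⟨x, hx⟩, LinearMap.mem_ker.mpr h, rfl⟩

lemma mem_Zker'_iff {x : H} :
    x ∈ S.Zker' ↔ ∃ hx : x ∈ S.Amax'.domain, S.Amax' ⟨x, hx⟩ = 0 := by
  constructor
  · rintro ⟨u, hu, rfl⟩
    exact ⟨u.2, by simpa using hu⟩
  · rintro ⟨hx, h⟩
    exact Submodule.mem_map.mpr ⟨⟨x, hx⟩, LinearMap.mem_ker.mpr h, rfl⟩

lemma dense_Agam : Dense (S.Agam.domain : Set H) :=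
  S.dense_Amin.mono (fun x hx => S.Amin_le_Agam.1 hx)

lemma Agamstar_le_Amax' : S.Agam.adjoint ≤ S.Amax' :=
  adjoint_anti S.dense_Amin S.dense_Agam S.Amin_le_Agam

lemma inner_Agaminv (f g : H) :
    ⟪f, S.Agamstarinv g⟫ = ⟪S.Agaminv f, g⟫ := by
  have h1 := (LinearPMap.adjoint_isFormalAdjoint S.dense_Agam).symm
    ⟨S.Agaminv f, S.Agaminv_mem f⟩ ⟨S.Agamstarinv g, S.Agamstarinv_mem g⟩
  rw [S.Agaminv_right f, S.Agamstarinv_right g] at h1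
  exact h1

lemma green (u : S.Amax.domain) (v : S.Amax'.domain) :
    ⟪(S.Amax u : H), (v : H)⟫ - ⟪(u : H), S.Amax' v⟫
      = ⟪(S.Amax u : H), S.vzeta v⟫ - ⟪S.uzeta u, S.Amax' v⟫ := by
  have hu : (u : H) = S.Agaminv (S.Amax u) + S.uzeta u := by simp [Setup.uzeta]
  have hv : (v : H) = S.Agamstarinv (S.Amax' v) + S.vzeta v := by simp [Setup.vzeta]
  calc ⟪(S.Amax u : H), (v : H)⟫ - ⟪(u : H), S.Amax' v⟫
      = ⟪(S.Amax u : H), S.Agamstarinv (S.Amax' v) + S.vzeta v⟫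
        - ⟪S.Agaminv (S.Amax u) + S.uzeta u, S.Amax' v⟫ := by rw [← hu, ← hv]
    _ = ⟪(S.Amax u : H), S.vzeta v⟫ - ⟪S.uzeta u, S.Amax' v⟫ := by
        rw [inner_add_right, inner_add_left, S.inner_Agaminv]
        ring

lemma uzeta_add (u v : S.Amax.domain) : S.uzeta (u + v) = S.uzeta u + S.uzeta v := by
  simp only [Setup.uzeta, Submodule.coe_add, S.Amax.map_add, map_add]
  abel

lemma uzeta_smul (c : ℂ) (u : S.Amax.domain) : S.uzeta (c • u) = c • S.uzeta u := by
  simp only [Setup.uzeta, Submodule.coe_smul, S.Amax.map_smul, map_smul, smul_sub]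

lemma vzeta_add (u v : S.Amax'.domain) : S.vzeta (u + v) = S.vzeta u + S.vzeta v := by
  simp only [Setup.vzeta, Submodule.coe_add, S.Amax'.map_add, map_add]
  abel

lemma vzeta_smul (c : ℂ) (u : S.Amax'.domain) : S.vzeta (c • u) = c • S.vzeta u := by
  simp only [Setup.vzeta, Submodule.coe_smul, S.Amax'.map_smul, map_smul, smul_sub]

lemma decomp {z : H} (hz : z ∈ S.Zker) (f : H) :
    ∃ h : S.Agaminv f + z ∈ S.Amax.domain,
      S.Amax ⟨S.Agaminv f + z, h⟩ = f ∧ S.uzeta ⟨S.Agaminv f + z, h⟩ = z := by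
  obtain ⟨hz1, hz2⟩ := S.mem_Zker_iff.mp hz
  have hAf : S.Agaminv f ∈ S.Amax.domain := S.Agam_le_max.1 (S.Agaminv_mem f)
  have hmem : S.Agaminv f + z ∈ S.Amax.domain := add_mem hAf hz1
  have hval : S.Amax ⟨S.Agaminv f + z, hmem⟩ = f := by
    have he : (⟨S.Agaminv f + z, hmem⟩ : S.Amax.domain)
        = ⟨S.Agaminv f, hAf⟩ + ⟨z, hz1⟩ := rfl
    rw [he, S.Amax.map_add, hz2, add_zero]
    have h2 : S.Agam ⟨S.Agaminv f, S.Agaminv_mem f⟩ = S.Amax ⟨S.Agaminv f, hAf⟩ :=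
      S.Agam_le_max.2 rfl
    rw [← h2]
    exact S.Agaminv_right f
  refine ⟨hmem, hval, ?_⟩
  simp [Setup.uzeta, hval]

lemma decomp' {z : H} (hz : z ∈ S.Zker') (g : H) :
    ∃ h : S.Agamstarinv g + z ∈ S.Amax'.domain,
      S.Amax' ⟨S.Agamstarinv g + z, h⟩ = g ∧ S.vzeta ⟨S.Agamstarinv g + z, h⟩ = z := by
  obtain ⟨hz1, hz2⟩ := S.mem_Zker'_iff.mp hz
  have hAg : S.Agamstarinv g ∈ S.Amax'.domain :=
    S.Agamstar_le_Amax'.1 (S.Agamstarinv_mem g)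
  have hmem : S.Agamstarinv g + z ∈ S.Amax'.domain := add_mem hAg hz1
  have hval : S.Amax' ⟨S.Agamstarinv g + z, hmem⟩ = g := by
    have he : (⟨S.Agamstarinv g + z, hmem⟩ : S.Amax'.domain)
        = ⟨S.Agamstarinv g, hAg⟩ + ⟨z, hz1⟩ := rfl
    rw [he, S.Amax'.map_add, hz2, add_zero]
    have h2 : S.Agam.adjoint ⟨S.Agamstarinv g, S.Agamstarinv_mem g⟩ = S.Amax' ⟨S.Agamstarinv g, hAg⟩ :=
      S.Agamstar_le_Amax'.2 rfl
    rw [← h2]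
    exact S.Agamstarinv_right g
  refine ⟨hmem, hval, ?_⟩
  simp [Setup.vzeta, hval]

end Setup

end AuxGrubb


section AuxGrubb2

local notation "⟪" x ", " y "⟫" => @inner ℂ _ _ x y

variable (S : Setup H) (W : Submodule ℂ H) (hW : IsClosed (W : Set H)) (T : H →ₗ.[ℂ] H)

/-- The domain of the operator `Ã` corresponding to `T`. -/
def tildeDom : Submodule ℂ H where
  carrier := {x | ∃ hx : x ∈ S.Amax.domain,
    (S.uzeta ⟨x, hx⟩, projCl W hW (S.Amax ⟨x, hx⟩)) ∈ T.graph}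
  zero_mem' := by
    refine ⟨S.Amax.domain.zero_mem, ?_⟩
    have he : (⟨(0 : H), S.Amax.domain.zero_mem⟩ : S.Amax.domain) = 0 := rfl
    rw [he, S.Amax.map_zero]
    have h1 : S.uzeta (0 : S.Amax.domain) = 0 := by
      simp [Setup.uzeta, S.Amax.map_zero]
    rw [h1]
    simpa using T.graph.zero_mem
  add_mem' := by
    rintro a b ⟨ha, hga⟩ ⟨hb, hgb⟩
    refine ⟨add_mem ha hb, ?_⟩
    have he : (⟨a + b, add_mem ha hb⟩ : S.Amax.domain) = ⟨a, ha⟩ + ⟨b, hb⟩ := rfl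
    rw [he, S.uzeta_add, S.Amax.map_add, map_add]
    exact T.graph.add_mem hga hgb
  smul_mem' := by
    rintro c a ⟨ha, hga⟩
    refine ⟨Submodule.smul_mem _ c ha, ?_⟩
    have he : (⟨c • a, Submodule.smul_mem _ c ha⟩ : S.Amax.domain) = c • (⟨a, ha⟩ : S.Amax.domain) := rfl
    rw [he, S.uzeta_smul, S.Amax.map_smul, map_smul]
    exact T.graph.smul_mem c hga

lemma mem_At_iff (x : H) :
    x ∈ (S.Amax.domRestrict (tildeDom S W hW T)).domain ↔
      ∃ hx : x ∈ S.Amax.domain,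
        (S.uzeta ⟨x, hx⟩, projCl W hW (S.Amax ⟨x, hx⟩)) ∈ T.graph := by
  rw [LinearPMap.domRestrict_domain, Submodule.mem_inf]
  exact ⟨fun h => h.1, fun h => ⟨h, h.choose⟩⟩

lemma At_apply (x : (S.Amax.domRestrict (tildeDom S W hW T)).domain)
    (hx : (x : H) ∈ S.Amax.domain) :
    (S.Amax.domRestrict (tildeDom S W hW T)) x = S.Amax ⟨x, hx⟩ :=
  LinearPMap.domRestrict_apply rfl

lemma Amin_le_At (hWZ : W ≤ S.Zker') :
    S.Amin ≤ S.Amax.domRestrict (tildeDom S W hW T) := by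
  constructor
  · intro x hx
    have hxmax : x ∈ S.Amax.domain := S.Amin_le_max.1 hx
    have hxAg : x ∈ S.Agam.domain := S.Amin_le_Agam.1 hx
    have huz : S.uzeta ⟨x, hxmax⟩ = 0 := by
      have h1 : S.Amax ⟨x, hxmax⟩ = S.Agam ⟨x, hxAg⟩ := (S.Agam_le_max.2 rfl).symm
      simp only [Setup.uzeta, h1]
      rw [S.Agaminv_left ⟨x, hxAg⟩]
      simp
    have hproj : projCl W hW (S.Amax ⟨x, hxmax⟩) = 0 := by
      apply projCl_eq_zero
      rw [Submodule.mem_orthogonal]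
      intro w hw
      obtain ⟨hw1, hw2⟩ := S.mem_Zker'_iff.mp (hWZ hw)
      have h1 : S.Amax ⟨x, hxmax⟩ = S.Amin ⟨x, hx⟩ := (S.Amin_le_max.2 rfl).symm
      rw [h1]
      have h2 := (LinearPMap.adjoint_isFormalAdjoint S.dense_Amin) ⟨w, hw1⟩ ⟨x, hx⟩
      have hw2' : S.Amin.adjoint ⟨w, hw1⟩ = 0 := hw2
      rw [hw2'] at h2
      simpa using h2.symm
    refine (mem_At_iff S W hW T x).mpr ⟨hxmax, ?_⟩
    rw [huz, hproj]
    simpa using T.graph.zero_mem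
  · intro x y hxy
    obtain ⟨y', hy', hAy⟩ := LinearPMap.exists_of_le (LinearPMap.domRestrict_le) y
    rw [hAy, S.Amin_le_max.2 (show (x : H) = ((⟨(x : H), S.Amin_le_max.1 x.2⟩ : S.Amax.domain) : H) from rfl)]
    exact congrArg _ (Subtype.ext (by rw [← hy', ← hxy]))

lemma dense_At (hWZ : W ≤ S.Zker') :
    Dense (((S.Amax.domRestrict (tildeDom S W hW T)).domain : Set H)) :=
  S.dense_Amin.mono (fun x hx => (Amin_le_At S W hW T hWZ).1 hx)

lemma At_graph_closed (hTclosed : IsClosed (T.graph : Set (H × H))) :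
    IsClosed ((S.Amax.domRestrict (tildeDom S W hW T)).graph : Set (H × H)) := by
  have hAmaxcl : IsClosed (S.Amax.graph : Set (H × H)) := adjoint_graph_closed S.dense_Amin'
  have hcont : Continuous (fun p : H × H => ((p.1 - S.Agaminv p.2, projCl W hW p.2) : H × H)) := by
    fun_prop
  have hset : (((S.Amax.domRestrict (tildeDom S W hW T)).graph : Submodule ℂ (H × H)) : Set (H × H))
      = (S.Amax.graph : Set (H × H)) ∩
        (fun p : H × H => ((p.1 - S.Agaminv p.2, projCl W hW p.2) : H × H)) ⁻¹'
          (T.graph : Set (H × H)) := by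
    ext p
    constructor
    · intro hp
      obtain ⟨y, hy1, hy2⟩ := (S.Amax.domRestrict (tildeDom S W hW T)).mem_graph_iff.mp hp
      obtain ⟨hx, hgr⟩ := (mem_At_iff S W hW T y).mp y.2
      have hval : (S.Amax.domRestrict (tildeDom S W hW T)) y = S.Amax ⟨y, hx⟩ :=
        At_apply S W hW T y hx
      constructor
      · exact SetLike.mem_coe.mpr (S.Amax.mem_graph_iff.mpr
          ⟨⟨y, hx⟩, hy1, by rw [← hy2, hval]⟩)
      · show ((p.1 - S.Agaminv p.2, projCl W hW p.2) : H × H) ∈ (T.graph : Set (H × H))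
        have hφ : ((p.1 - S.Agaminv p.2, projCl W hW p.2) : H × H)
            = (S.uzeta ⟨y, hx⟩, projCl W hW (S.Amax ⟨y, hx⟩)) := by
          rw [← hy1, ← hy2, hval]
          rfl
        rw [hφ]
        exact hgr
    · rintro ⟨hp1, hp2⟩
      obtain ⟨u, hu1, hu2⟩ := S.Amax.mem_graph_iff.mp hp1
      have hgr : (S.uzeta u, projCl W hW (S.Amax u)) ∈ T.graph := by
        have hφ : ((p.1 - S.Agaminv p.2, projCl W hW p.2) : H × H)
            = (S.uzeta u, projCl W hW (S.Amax u)) := by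
          rw [← hu1, ← hu2]
          rfl
        have hp2' : ((p.1 - S.Agaminv p.2, projCl W hW p.2) : H × H) ∈ (T.graph : Set (H × H)) := hp2
        rw [hφ] at hp2'
        exact hp2'
      have hdom : (u : H) ∈ (S.Amax.domRestrict (tildeDom S W hW T)).domain := by
        refine (mem_At_iff S W hW T u).mpr ⟨u.2, ?_⟩
        rw [Subtype.coe_eta]
        exact hgr
      refine SetLike.mem_coe.mpr ((S.Amax.domRestrict (tildeDom S W hW T)).mem_graph_iff.mpr ⟨⟨u, hdom⟩, hu1, ?_⟩)
      rw [At_apply S W hW T ⟨u, hdom⟩ u.2, Subtype.coe_eta]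
      exact hu2
  rw [hset]
  exact hAmaxcl.inter (hTclosed.preimage hcont)

lemma dzeta_At_eq (hTZ : (T.domain : Set H) ⊆ (S.Zker : Set H))
    (hTran : ∀ z : T.domain, T z ∈ W) :
    S.dzeta (S.Amax.domRestrict (tildeDom S W hW T)) = (T.domain : Set H) := by
  ext x
  constructor
  · rintro ⟨u, hu, rfl⟩
    obtain ⟨hx, hgr⟩ := (mem_At_iff S W hW T u).mp hu
    obtain ⟨y, hy1, _⟩ := T.mem_graph_iff.mp hgr
    have he : S.uzeta u = (y : H) := by rw [hy1, Subtype.coe_eta]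
    rw [he]
    exact y.2
  · intro hx
    obtain ⟨hmem, hval, huz⟩ := S.decomp (hTZ hx) (T ⟨x, hx⟩)
    refine ⟨⟨_, hmem⟩, ?_, huz.symm⟩
    refine (mem_At_iff S W hW T _).mpr ⟨hmem, ?_⟩
    rw [huz, hval, projCl_eq_self W hW (hTran ⟨x, hx⟩)]
    exact T.mem_graph ⟨x, hx⟩

lemma mem_dzeta'_of (hWZ : W ≤ S.Zker') {w' : H} (hw' : w' ∈ W) (g : H)
    (hrel : ∀ z : T.domain, ⟪(T z : H), w'⟫ = ⟪(z : H), g⟫) :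
    w' ∈ S.dzeta' (S.Amax.domRestrict (tildeDom S W hW T)) := by
  obtain ⟨hmem, hval, hvz⟩ := S.decomp' (hWZ hw') g
  have hadj : S.Agamstarinv g + w' ∈ (S.Amax.domRestrict (tildeDom S W hW T)).adjoint.domain := by
    apply LinearPMap.mem_adjoint_domain_of_exists
    refine ⟨g, fun u => ?_⟩
    obtain ⟨hx, hgr⟩ := (mem_At_iff S W hW T u).mp u.2
    have hAtu : (S.Amax.domRestrict (tildeDom S W hW T)) u = S.Amax ⟨u, hx⟩ :=
      At_apply S W hW T u hx
    have hG := S.green ⟨(u : H), hx⟩ ⟨S.Agamstarinv g + w', hmem⟩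
    rw [hval, hvz] at hG
    obtain ⟨y, hy1, hy2⟩ := T.mem_graph_iff.mp hgr
    dsimp only at hy1 hy2
    have h3 : ⟪(S.Amax ⟨(u : H), hx⟩ : H), w'⟫ = ⟪S.uzeta ⟨(u : H), hx⟩, g⟫ := by
      rw [← inner_projCl W hW _ hw', ← hy2, hrel y, hy1]
    rw [h3, sub_self] at hG
    have h4 : ⟪(S.Amax ⟨(u : H), hx⟩ : H), (S.Agamstarinv g + w' : H)⟫ = ⟪(u : H), g⟫ :=
      sub_eq_zero.mp hG
    rw [hAtu]
    have h5 := congrArg (starRingEnd ℂ) h4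
    rw [inner_conj_symm, inner_conj_symm] at h5
    exact h5.symm
  exact ⟨⟨_, hmem⟩, hadj, hvz.symm⟩

lemma dzeta'_subset_W (hWZ : W ≤ S.Zker') :
    S.dzeta' (S.Amax.domRestrict (tildeDom S W hW T)) ⊆ (W : Set H) := by
  rintro x ⟨v, hva, rfl⟩
  haveI := hW.completeSpace_coe
  suffices h : S.vzeta v ∈ Wᗮᗮ by
    rw [Submodule.orthogonal_orthogonal] at h
    exact h
  rw [Submodule.mem_orthogonal]
  intro f hf
  obtain ⟨hmem, hval, huz⟩ := S.decomp (S.Zker.zero_mem) f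
  have hdom : S.Agaminv f + 0 ∈ (S.Amax.domRestrict (tildeDom S W hW T)).domain := by
    refine (mem_At_iff S W hW T _).mpr ⟨hmem, ?_⟩
    rw [huz, hval, projCl_eq_zero W hW hf]
    simpa using T.graph.zero_mem
  have hAleAt : S.Amin ≤ S.Amax.domRestrict (tildeDom S W hW T) := Amin_le_At S W hW T hWZ
  have hdense := dense_At S W hW T hWZ
  have hAdle : (S.Amax.domRestrict (tildeDom S W hW T)).adjoint ≤ S.Amax' :=
    adjoint_anti S.dense_Amin hdense hAleAt
  have hpair := (LinearPMap.adjoint_isFormalAdjoint hdense) ⟨(v : H), hva⟩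
    ⟨S.Agaminv f + 0, hdom⟩
  have hadjval : (S.Amax.domRestrict (tildeDom S W hW T)).adjoint ⟨(v : H), hva⟩
      = S.Amax' v := hAdle.2 rfl
  have hAtu : (S.Amax.domRestrict (tildeDom S W hW T)) ⟨S.Agaminv f + 0, hdom⟩
      = S.Amax ⟨S.Agaminv f + 0, hmem⟩ := At_apply S W hW T _ hmem
  have hG := S.green ⟨S.Agaminv f + 0, hmem⟩ v
  rw [hval, huz] at hG
  have h1 : ⟪S.Amax' v, (S.Agaminv f + 0 : H)⟫ = ⟪(v : H), f⟫ := by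
    rw [← hadjval, hpair, hAtu, hval]
  have h2 := congrArg (starRingEnd ℂ) h1
  rw [inner_conj_symm, inner_conj_symm] at h2
  rw [h2, sub_self] at hG
  have := (sub_eq_zero.mp hG.symm)
  rw [inner_zero_left] at hG
  rw [sub_zero] at hG
  exact hG.symm

end AuxGrubb2


section AuxGrubb3

local notation "⟪" x ", " y "⟫" => @inner ℂ _ _ x y

variable (S : Setup H) (W : Submodule ℂ H) (hW : IsClosed (W : Set H)) (T : H →ₗ.[ℂ] H)

set_option maxHeartbeats 1000000 in
lemma dzeta'_orth_eq_zero (hWZ : W ≤ S.Zker') (hTran : ∀ z : T.domain, T z ∈ W)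
    (hTclosed : IsClosed (T.graph : Set (H × H))) {w : H} (hwW : w ∈ W)
    (horth : ∀ x ∈ S.dzeta' (S.Amax.domRestrict (tildeDom S W hW T)), ⟪x, w⟫ = 0) :
    w = 0 := by
  set e := WithLp.prodContinuousLinearEquiv 2 ℂ H H with he
  set G : Submodule ℂ (WithLp 2 (H × H)) :=
    T.graph.comap e.toLinearEquiv.toLinearMap with hGdef
  have hGcl : IsClosed (G : Set (WithLp 2 (H × H))) := by
    have h : (G : Set (WithLp 2 (H × H))) = ⇑e ⁻¹' (T.graph : Set (H × H)) := rfl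
    rw [h]
    exact hTclosed.preimage e.continuous
  haveI : CompleteSpace G := hGcl.completeSpace_coe
  set x0 : WithLp 2 (H × H) := e.symm (0, w) with hx0
  set q := G.orthogonalProjectionOnto x0 with hq
  have hqG : e (q : WithLp 2 (H × H)) ∈ T.graph := q.2
  obtain ⟨y0, hy1, hy2⟩ := T.mem_graph_iff.mp hqG
  have hq_eq : e (q : WithLp 2 (H × H)) = ((y0 : H), (T y0 : H)) := Prod.ext hy1.symm hy2.symm
  have key : ∀ p r : H × H, ⟪(e.symm p : WithLp 2 (H × H)), (e.symm r : WithLp 2 (H × H))⟫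
      = ⟪p.1, r.1⟫ + ⟪p.2, r.2⟫ := fun p r => rfl
  have horthG : x0 - (q : WithLp 2 (H × H)) ∈ Gᗮ := Submodule.sub_starProjection_mem_orthogonal (K := G) x0
  have hrel : ∀ z : T.domain, ⟪(T z : H), w - (T y0 : H)⟫ = ⟪(z : H), (y0 : H)⟫ := by
    intro z
    have hz : e.symm ((z : H), (T z : H)) ∈ G := by
      show e (e.symm ((z : H), (T z : H))) ∈ T.graph
      rw [e.apply_symm_apply]
      exact T.mem_graph z
    have h0 := (Submodule.mem_orthogonal G _).mp horthG _ hz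
    have hsub : x0 - (q : WithLp 2 (H × H)) = e.symm (((0 : H), w) - ((y0 : H), (T y0 : H))) := by
      rw [map_sub, ← hq_eq, e.symm_apply_apply]
    rw [hsub, key] at h0
    simp only [Prod.fst_sub, Prod.snd_sub] at h0
    rw [zero_sub, inner_neg_right] at h0
    linear_combination h0
  have hwsub := mem_dzeta'_of S W hW T hWZ (W.sub_mem hwW (hTran y0)) (y0 : H) hrel
  have h1 : ⟪w - (T y0 : H), w⟫ = 0 := horth _ hwsub
  have h2 := hrel y0
  have h2' : ⟪w - (T y0 : H), (T y0 : H)⟫ = ⟪(y0 : H), (y0 : H)⟫ := by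
    have h := congrArg (starRingEnd ℂ) h2
    rw [inner_conj_symm, inner_conj_symm] at h
    exact h
  have h3 : ⟪w - (T y0 : H), w - (T y0 : H)⟫ = -⟪(y0 : H), (y0 : H)⟫ := by
    rw [inner_sub_right, h1, h2']
    ring
  have h5 : (‖w - (T y0 : H)‖)^2 = -((‖(y0 : H)‖)^2) := by
    have hre := congrArg (⇑(RCLike.re (K := ℂ))) h3
    rwa [map_neg, inner_self_eq_norm_sq, inner_self_eq_norm_sq] at hre
  have h6 : ‖(y0 : H)‖ = 0 := by nlinarith [sq_nonneg ‖w - (T y0 : H)‖, norm_nonneg ((y0 : H))]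
  have h7 : ‖w - (T y0 : H)‖ = 0 := by nlinarith [norm_nonneg (w - (T y0 : H))]
  have hy0 : y0 = 0 := Subtype.ext (norm_eq_zero.mp h6)
  have hw' : w - (T y0 : H) = 0 := norm_eq_zero.mp h7
  have : w = (T y0 : H) := by
    rw [sub_eq_zero] at hw'
    exact hw'
  rw [this, hy0, T.map_zero]

/-- `{v_ζ' : v ∈ D(Ã*)}` as a submodule. -/
def dzetaSub' : Submodule ℂ H where
  carrier := S.dzeta' (S.Amax.domRestrict (tildeDom S W hW T))
  zero_mem' := by
    refine ⟨0, (S.Amax.domRestrict (tildeDom S W hW T)).adjoint.domain.zero_mem, ?_⟩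
    simp [Setup.vzeta, S.Amax'.map_zero]
  add_mem' := by
    rintro a b ⟨va, hva, rfl⟩ ⟨vb, hvb, rfl⟩
    exact ⟨va + vb, add_mem hva hvb, (S.vzeta_add va vb).symm⟩
  smul_mem' := by
    rintro c a ⟨va, hva, rfl⟩
    exact ⟨c • va, Submodule.smul_mem _ c hva, (S.vzeta_smul c va).symm⟩

lemma closure_dzeta' (hWZ : W ≤ S.Zker') (hTran : ∀ z : T.domain, T z ∈ W)
    (hTclosed : IsClosed (T.graph : Set (H × H))) :
    closure (S.dzeta' (S.Amax.domRestrict (tildeDom S W hW T))) = (W : Set H) := by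
  apply Set.Subset.antisymm
  · exact closure_minimal (dzeta'_subset_W S W hW T hWZ) hW
  · intro w hwW
    set K := (dzetaSub' S W hW T).topologicalClosure with hK
    haveI : CompleteSpace K := (Submodule.isClosed_topologicalClosure _).completeSpace_coe
    set c := K.orthogonalProjectionOnto w with hc
    have hKW : K ≤ W := Submodule.topologicalClosure_minimal _
      (fun x hx => dzeta'_subset_W S W hW T hWZ hx) hW
    have hw'W : w - (c : H) ∈ W := W.sub_mem hwW (hKW c.2)
    have horth : ∀ x ∈ S.dzeta' (S.Amax.domRestrict (tildeDom S W hW T)),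
        ⟪x, w - (c : H)⟫ = 0 := by
      intro x hx
      have hxK : x ∈ K := Submodule.le_topologicalClosure _ hx
      exact (Submodule.mem_orthogonal K _).mp
        (Submodule.sub_starProjection_mem_orthogonal (K := K) w) x hxK
    have hzero := dzeta'_orth_eq_zero S W hW T hWZ hTran hTclosed hw'W horth
    have hwc : w = (c : H) := by
      rw [sub_eq_zero] at hzero
      exact hzero
    rw [hwc]
    have h2 : (c : H) ∈ ((dzetaSub' S W hW T).topologicalClosure : Set H) := c.2
    rw [Submodule.topologicalClosure_coe] at h2
    exact h2

end AuxGrubb3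


theorem statement_4 (S : Setup H) (V W : Submodule ℂ H)
    (hVZ : V ≤ S.Zker) (hWZ : W ≤ S.Zker')
    (hVcl : IsClosed (V : Set H)) (hWcl : IsClosed (W : Set H))
    (T : H →ₗ.[ℂ] H) (hTdom : (T.domain : Set H) ⊆ (V : Set H))
    (hTran : ∀ x : T.domain, T x ∈ W)
    (hTdense : closure (T.domain : Set H) = (V : Set H))
    (hTclosed : IsClosed (T.graph : Set (H × H))) :
    ∃ At : H →ₗ.[ℂ] H,
      S.Amin ≤ At ∧ At ≤ S.Amax ∧ IsClosed (At.graph : Set (H × H)) ∧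
      (∀ x : H, x ∈ At.domain ↔ ∃ hx : x ∈ S.Amax.domain,
          (S.uzeta ⟨x, hx⟩, projCl W hWcl (S.Amax ⟨x, hx⟩)) ∈ T.graph) ∧
      closure (S.dzeta At) = (V : Set H) ∧
      closure (S.dzeta' At) = (W : Set H) ∧
      (T.graph : Set (H × H)) = S.TgraphOn At W hWcl := by
  refine ⟨S.Amax.domRestrict (tildeDom S W hWcl T), Amin_le_At S W hWcl T hWZ,
    LinearPMap.domRestrict_le, At_graph_closed S W hWcl T hTclosed,
    mem_At_iff S W hWcl T, ?_, ?_, ?_⟩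
  · rw [dzeta_At_eq S W hWcl T (fun x hx => hVZ (hTdom hx)) hTran]
    exact hTdense
  · exact closure_dzeta' S W hWcl T hWZ hTran hTclosed
  · ext p
    constructor
    · intro hp
      obtain ⟨z, hz1, hz2⟩ := T.mem_graph_iff.mp hp
      obtain ⟨hmem, hval, huz⟩ := S.decomp (hVZ (hTdom z.2)) (T z)
      refine ⟨⟨_, hmem⟩, ?_, ?_, ?_⟩
      · refine (mem_At_iff S W hWcl T _).mpr ⟨hmem, ?_⟩
        rw [huz, hval, projCl_eq_self W hWcl (hTran z)]
        exact T.mem_graph z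
      · rw [huz]
        exact hz1.symm
      · rw [hval, projCl_eq_self W hWcl (hTran z)]
        exact hz2.symm
    · rintro ⟨u, hu, hp1, hp2⟩
      obtain ⟨hx, hgr⟩ := (mem_At_iff S W hWcl T u).mp hu
      have he : (⟨(u : H), hx⟩ : S.Amax.domain) = u := Subtype.coe_eta u hx
      rw [he] at hgr
      have hpe : p = (S.uzeta u, projCl W hWcl (S.Amax u)) := Prod.ext hp1 hp2
      rw [hpe]
      exact hgr

end GrubbExt
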